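/- For every element R of the even subalgebra Cl⁰(3) there exists a real number c ≥ 0 such that R·reverse(R) = c·1, and c = 0 if and only if R = 0. (Thus R ↦ R·reverse(R) endows the 4-dimensional space Cl⁰(3) with a positive definite Euclidean norm.) -/
import Mathlib

noncomputable section

/-- The positive definite quadratic form `Q(v) = v₁² + v₂² + v₃²` on `ℝ³`. -/
def Q3 : QuadraticForm ℝ (Fin 3 → ℝ) :=
  QuadraticMap.weightedSumSquares ℝ (fun _ : Fin 3 => (1 : ℝ))

namespace Cl3aux
open CliffordAlgebra

def e (i : Fin 3) : CliffordAlgebra Q3 := ι Q3 (Pi.single i 1)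

lemma Q3_single (i : Fin 3) : Q3 (Pi.single i 1) = 1 := by
  fin_cases i <;>
    simp [Q3, QuadraticMap.weightedSumSquares_apply, Fin.sum_univ_three, Pi.single_apply]

lemma e_sq (i : Fin 3) : e i * e i = 1 := by
  rw [e, ι_sq_scalar, Q3_single, map_one]

lemma e_anti {i j : Fin 3} (h : i ≠ j) : e i * e j = -(e j * e i) := by
  have hp : QuadraticMap.polar Q3 (Pi.single i 1) (Pi.single j 1) = 0 := by
    fin_cases i <;> fin_cases j <;> first
      | exact absurd rfl h
      | simp [QuadraticMap.polar, Q3, QuadraticMap.weightedSumSquares_apply,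
          Fin.sum_univ_three, Pi.single_apply]
  have := ι_mul_ι_add_swap (Q := Q3) (Pi.single i (1:ℝ)) (Pi.single j 1)
  rw [hp, map_zero] at this
  exact eq_neg_of_add_eq_zero_left this

end Cl3aux

namespace Cl3aux
open CliffordAlgebra

@[simp] lemma sq' (i : Fin 3) (x : CliffordAlgebra Q3) : e i * (e i * x) = x := by
  rw [← mul_assoc, e_sq, one_mul]

@[simp] lemma swap10 (x : CliffordAlgebra Q3) : e 1 * (e 0 * x) = -(e 0 * (e 1 * x)) := by
  rw [← mul_assoc, ← mul_assoc, e_anti (by decide), neg_mul]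

@[simp] lemma swap20 (x : CliffordAlgebra Q3) : e 2 * (e 0 * x) = -(e 0 * (e 2 * x)) := by
  rw [← mul_assoc, ← mul_assoc, e_anti (by decide), neg_mul]

@[simp] lemma swap21 (x : CliffordAlgebra Q3) : e 2 * (e 1 * x) = -(e 1 * (e 2 * x)) := by
  rw [← mul_assoc, ← mul_assoc, e_anti (by decide), neg_mul]

@[simp] lemma p10 : e 1 * e 0 = -(e 0 * e 1) := e_anti (by decide)
@[simp] lemma p20 : e 2 * e 0 = -(e 0 * e 2) := e_anti (by decide)
@[simp] lemma p21 : e 2 * e 1 = -(e 1 * e 2) := e_anti (by decide)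
attribute [simp] e_sq

def E1 : CliffordAlgebra Q3 := e 0 * e 1
def E2 : CliffordAlgebra Q3 := e 1 * e 2
def E3 : CliffordAlgebra Q3 := e 0 * e 2

lemma E1E1 : E1 * E1 = -1 := by simp [E1, mul_assoc, e_sq]
lemma E2E2 : E2 * E2 = -1 := by simp [E2, mul_assoc, e_sq]
lemma E3E3 : E3 * E3 = -1 := by simp [E3, mul_assoc, e_sq]
lemma E1E2 : E1 * E2 = E3 := by simp [E1, E2, E3, mul_assoc]
lemma E2E1 : E2 * E1 = -E3 := by simp [E1, E2, E3, mul_assoc]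
lemma E2E3 : E2 * E3 = E1 := by simp [E1, E2, E3, mul_assoc]
lemma E3E2 : E3 * E2 = -E1 := by simp [E1, E2, E3, mul_assoc]
lemma E3E1 : E3 * E1 = E2 := by simp [E1, E2, E3, mul_assoc]
lemma E1E3 : E1 * E3 = -E2 := by simp [E1, E2, E3, mul_assoc]

end Cl3aux

namespace Cl3aux
open CliffordAlgebra

lemma E1_def : e 0 * e 1 = E1 := rfl
lemma E2_def : e 1 * e 2 = E2 := rfl
lemma E3_def : e 0 * e 2 = E3 := rfl

def Rep (x : CliffordAlgebra Q3) : Prop :=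
  ∃ a b c d : ℝ, x = a • 1 + b • E1 + c • E2 + d • E3

lemma rep_mul {x y : CliffordAlgebra Q3} (hx : Rep x) (hy : Rep y) :
    ∀ a b c d a' b' c' d' : ℝ, x = a • 1 + b • E1 + c • E2 + d • E3 →
      y = a' • 1 + b' • E1 + c' • E2 + d' • E3 →
      x * y = (a*a' - b*b' - c*c' - d*d') • 1 + (a*b' + b*a' + c*d' - d*c') • E1
        + (a*c' + c*a' + d*b' - b*d') • E2 + (a*d' + d*a' + b*c' - c*b') • E3 := by
  rintro a b c d a' b' c' d' rfl rfl
  simp only [add_mul, mul_add, smul_mul_smul_comm, one_mul, mul_one,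
    E1E1, E1E2, E1E3, E2E1, E2E2, E2E3, E3E1, E3E2, E3E3, smul_neg]
  module

lemma ι_eq (m : Fin 3 → ℝ) : ι Q3 m = m 0 • e 0 + m 1 • e 1 + m 2 • e 2 := by
  have : m = m 0 • (Pi.single 0 1 : Fin 3 → ℝ) + m 1 • (Pi.single 1 1 : Fin 3 → ℝ) + m 2 • (Pi.single 2 1 : Fin 3 → ℝ) := by
    funext i; fin_cases i <;> simp [Pi.single_apply]
  rw [e, e, e, ← map_smul, ← map_smul, ← map_smul, ← map_add, ← map_add, ← this]

lemma rep_ιι (m₁ m₂ : Fin 3 → ℝ) : Rep (ι Q3 m₁ * ι Q3 m₂) := by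
  refine ⟨m₁ 0 * m₂ 0 + m₁ 1 * m₂ 1 + m₁ 2 * m₂ 2, m₁ 0 * m₂ 1 - m₁ 1 * m₂ 0,
    m₁ 1 * m₂ 2 - m₁ 2 * m₂ 1, m₁ 0 * m₂ 2 - m₁ 2 * m₂ 0, ?_⟩
  simp only [ι_eq, add_mul, mul_add, smul_mul_smul_comm, e_sq, p10, p20, p21,
    E1_def, E2_def, E3_def, smul_neg]
  module

lemma rep_of_even (x : CliffordAlgebra Q3) (hx : x ∈ evenOdd Q3 0) : Rep x := by
  refine even_induction Q3 (motive := fun x _ => Rep x) ?_ ?_ ?_ x hx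
  · intro r
    exact ⟨r, 0, 0, 0, by simp [Algebra.algebraMap_eq_smul_one]⟩
  · rintro x y hx hy ⟨a, b, c, d, rfl⟩ ⟨a', b', c', d', rfl⟩
    exact ⟨a + a', b + b', c + c', d + d', by module⟩
  · rintro m₁ m₂ x hx ⟨a', b', c', d', h'⟩
    obtain ⟨a, b, c, d, h⟩ := rep_ιι m₁ m₂
    exact ⟨_, _, _, _, rep_mul (rep_ιι m₁ m₂) ⟨_, _, _, _, h'⟩ a b c d a' b' c' d' h h'⟩

lemma reverse_E1 : reverse (Q := Q3) E1 = -E1 := by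
  rw [E1, e, e, reverse.map_mul, reverse_ι, reverse_ι, ← e, ← e, p10]
lemma reverse_E2 : reverse (Q := Q3) E2 = -E2 := by
  rw [E2, e, e, reverse.map_mul, reverse_ι, reverse_ι, ← e, ← e, p21]
lemma reverse_E3 : reverse (Q := Q3) E3 = -E3 := by
  rw [E3, e, e, reverse.map_mul, reverse_ι, reverse_ι, ← e, ← e, p20]

end Cl3aux

open Cl3aux CliffordAlgebra in
/-- For every element `R` of the even subalgebra `Cl⁰(3)` there is a real `c ≥ 0` with
`R · reverse R = c · 1`, and `c = 0` iff `R = 0`: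
`R ↦ R · reverse R` is a positive definite Euclidean norm on `Cl⁰(3)`. -/
theorem even_mul_reverse_self_nonneg_scalar (R : CliffordAlgebra.even Q3) :
    ∃ c : ℝ, 0 ≤ c ∧
      (R : CliffordAlgebra Q3) * CliffordAlgebra.reverse (R : CliffordAlgebra Q3) =
        algebraMap ℝ (CliffordAlgebra Q3) c ∧
      (c = 0 ↔ R = 0) := by
  obtain ⟨a, b, c, d, hR⟩ := rep_of_even (R : CliffordAlgebra Q3) R.2
  have hrev : reverse (Q := Q3) (R : CliffordAlgebra Q3)
      = a • 1 + (-b) • E1 + (-c) • E2 + (-d) • E3 := by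
    rw [hR]
    simp only [map_add, map_smul, reverse.map_one, reverse_E1, reverse_E2, reverse_E3,
      smul_neg, neg_smul]
  have hprod : (R : CliffordAlgebra Q3) * reverse (Q := Q3) (R : CliffordAlgebra Q3)
      = algebraMap ℝ (CliffordAlgebra Q3) (a^2 + b^2 + c^2 + d^2) := by
    rw [rep_mul ⟨_,_,_,_,hR⟩ ⟨_,_,_,_,hrev⟩ a b c d a (-b) (-c) (-d) hR hrev,
      Algebra.algebraMap_eq_smul_one]
    module
  refine ⟨a^2 + b^2 + c^2 + d^2, by positivity, hprod, ?_⟩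
  constructor
  · intro h
    have ha : a = 0 := by nlinarith [sq_nonneg a, sq_nonneg b, sq_nonneg c, sq_nonneg d]
    have hb : b = 0 := by nlinarith [sq_nonneg a, sq_nonneg b, sq_nonneg c, sq_nonneg d]
    have hc : c = 0 := by nlinarith [sq_nonneg a, sq_nonneg b, sq_nonneg c, sq_nonneg d]
    have hd : d = 0 := by nlinarith [sq_nonneg a, sq_nonneg b, sq_nonneg c, sq_nonneg d]
    have : (R : CliffordAlgebra Q3) = 0 := by rw [hR, ha, hb, hc, hd]; simp
    exact Subtype.ext this
  · rintro rfl
    rw [ZeroMemClass.coe_zero, zero_mul] at hprod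
    exact (algebraMap ℝ (CliffordAlgebra Q3)).injective (by rw [← hprod, map_zero])
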